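/- If a connected graph G of odd order satisfies odd(G - S) ≤ |S| for all nonempty vertex subsets S, then G is factor-critical, i.e., for every vertex x, G - x has a perfect matching. -/

import Mathlib

open SimpleGraph

/-- Number of odd components of the graph obtained from `G` by deleting `S`. -/
noncomputable def oddComp {V : Type*} (G : SimpleGraph V) (S : Set V) : ℕ :=
  Nat.card {C : (G.induce Sᶜ).ConnectedComponent // Odd (Nat.card C.supp)}

namespace TutteAux

set_option linter.unusedSectionVars false

variable {V : Type*} [Fintype V] {G : SimpleGraph V} {A B : Set V}

/-- Number of odd components of `G.induce A`. -/
noncomputable def oddA (G : SimpleGraph V) (A : Set V) : ℕ :=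
  Nat.card {c : (G.induce A).ConnectedComponent // Odd (Nat.card c.supp)}

lemma oddComp_eq_oddA (G : SimpleGraph V) (S : Set V) : oddComp G S = oddA G Sᶜ := rfl

/-- The support of a component of `G.induce A`, as a subset of `V`. -/
def suppS {A : Set V} (c : (G.induce A).ConnectedComponent) : Set V :=
  Subtype.val '' c.supp

lemma mem_suppS {c : (G.induce A).ConnectedComponent} {x : V} :
    x ∈ suppS c ↔ ∃ h : x ∈ A, (G.induce A).connectedComponentMk ⟨x, h⟩ = c := by
  constructor
  · rintro ⟨⟨a, ha⟩, h1, rfl⟩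
    exact ⟨ha, h1⟩
  · rintro ⟨h1, h2⟩
    exact ⟨⟨x, h1⟩, h2, rfl⟩

lemma suppS_subset (c : (G.induce A).ConnectedComponent) : suppS c ⊆ A := by
  rintro x ⟨a, _, rfl⟩; exact a.2

lemma suppS_nonempty (c : (G.induce A).ConnectedComponent) : (suppS c).Nonempty := by
  obtain ⟨v, hv⟩ := c.exists_rep
  exact ⟨v, mem_suppS.2 ⟨v.2, hv⟩⟩

lemma suppS_inj {c d : (G.induce A).ConnectedComponent} (h : suppS c = suppS d) : c = d := by
  obtain ⟨x, hx⟩ := suppS_nonempty c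
  obtain ⟨h1, h2⟩ := mem_suppS.1 hx
  obtain ⟨h1', h2'⟩ := mem_suppS.1 (h ▸ hx)
  rw [← h2, ← h2']

lemma eq_of_mem_suppS {c d : (G.induce A).ConnectedComponent} {x : V}
    (hc : x ∈ suppS c) (hd : x ∈ suppS d) : c = d := by
  obtain ⟨h1, h2⟩ := mem_suppS.1 hc
  obtain ⟨h1', h2'⟩ := mem_suppS.1 hd
  rw [← h2, ← h2']

lemma ncard_suppS (c : (G.induce A).ConnectedComponent) :
    Nat.card (suppS c) = Nat.card c.supp := by
  rw [suppS, Nat.card_image_of_injective Subtype.val_injective]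

/-- Closure of component supports under adjacency within `A`. -/
lemma adj_mem_suppS {c : (G.induce A).ConnectedComponent} {x y : V}
    (hx : x ∈ suppS c) (hy : y ∈ A) (hadj : G.Adj x y) : y ∈ suppS c := by
  obtain ⟨hxA, hmk⟩ := mem_suppS.1 hx
  refine mem_suppS.2 ⟨hy, ?_⟩
  rw [← hmk]
  exact ConnectedComponent.connectedComponentMk_eq_of_adj (by simpa using hadj.symm)

lemma walk_in_A {u v : ↥A} (h : (G.induce A).Reachable u v) :
    ∃ p : G.Walk ↑u ↑v, ∀ x ∈ p.support, x ∈ A := by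
  obtain ⟨q⟩ := h
  refine ⟨q.map (SimpleGraph.Embedding.induce A).toHom, ?_⟩
  intro x hx
  replace hx : x ∈ (q.map (SimpleGraph.Embedding.induce A).toHom).support := hx
  rw [SimpleGraph.Walk.support_map, List.mem_map] at hx
  obtain ⟨a, _, rfl⟩ := hx
  exact a.2

lemma reachable_of_walk {u v : V} (p : G.Walk u v) (hp : ∀ x ∈ p.support, x ∈ A)
    (hu : u ∈ A) (hv : v ∈ A) : (G.induce A).Reachable ⟨u, hu⟩ ⟨v, hv⟩ := by
  induction p with
  | nil => exact Reachable.refl _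
  | @cons a b c hab q ih =>
    have hb : b ∈ A := hp b (by simp)
    have h1 : (G.induce A).Adj ⟨a, hu⟩ ⟨b, hb⟩ := by simpa using hab
    exact h1.reachable.trans (ih (fun x hx => hp x (by simp [hx])) hb hv)

lemma walk_closed {W : Set V} (hcl : ∀ y z, y ∈ W → z ∈ A → G.Adj y z → z ∈ W)
    {u v : V} (p : G.Walk u v) (hp : ∀ x ∈ p.support, x ∈ A) (hu : u ∈ W) : v ∈ W := by
  induction p with
  | nil => exact hu
  | @cons a b c hab q ih =>
    exact ih (fun x hx => hp x (by simp [hx])) (hcl a b hu (hp b (by simp)) hab)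

/-- Transfer a component of `G.induce B` to a component of `G.induce A`, provided its
support is closed under adjacency within `A`. -/
lemma transfer (hBA : B ⊆ A) (c : (G.induce B).ConnectedComponent)
    (hcl : ∀ y z, y ∈ suppS c → z ∈ A → G.Adj y z → z ∈ suppS c) :
    ∃ c' : (G.induce A).ConnectedComponent, suppS c' = suppS c := by
  obtain ⟨x, hx⟩ := suppS_nonempty c
  have hxA : x ∈ A := hBA (suppS_subset c hx)
  refine ⟨(G.induce A).connectedComponentMk ⟨x, hxA⟩, Set.Subset.antisymm ?_ ?_⟩
  · rintro y hy
    obtain ⟨hyA, hmk⟩ := mem_suppS.1 hy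
    have hreach : (G.induce A).Reachable ⟨x, hxA⟩ ⟨y, hyA⟩ :=
      (ConnectedComponent.eq.1 hmk).symm
    obtain ⟨p, hp⟩ := walk_in_A hreach
    exact walk_closed hcl p hp hx
  · rintro y hy
    obtain ⟨hyB, hmk⟩ := mem_suppS.1 hy
    obtain ⟨hxB, hmkx⟩ := mem_suppS.1 hx
    have hreach : (G.induce B).Reachable ⟨x, hxB⟩ ⟨y, hyB⟩ :=
      ConnectedComponent.eq.1 (hmkx.trans hmk.symm)
    obtain ⟨p, hp⟩ := walk_in_A hreach
    exact mem_suppS.2 ⟨hBA hyB,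
      (ConnectedComponent.eq.2 (reachable_of_walk p (fun z hz => hBA (hp z hz)) hxA (hBA hyB))).symm ▸ rfl⟩


lemma walk_in_suppS {u v : ↥B} (h : (G.induce B).Reachable u v) :
    ∃ p : G.Walk ↑u ↑v, ∀ x ∈ p.support,
      x ∈ suppS ((G.induce B).connectedComponentMk u) := by
  classical
  obtain ⟨q⟩ := h
  refine ⟨q.map (SimpleGraph.Embedding.induce B).toHom, ?_⟩
  intro x hx
  replace hx : x ∈ (q.map (SimpleGraph.Embedding.induce B).toHom).support := hx
  rw [SimpleGraph.Walk.support_map, List.mem_map] at hx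
  obtain ⟨a, ha, rfl⟩ := hx
  refine mem_suppS.2 ⟨a.2, ?_⟩
  have : (G.induce B).Reachable u a := ⟨q.takeUntil a ha⟩
  simpa using (ConnectedComponent.eq.2 this).symm

/-- Transfer a component of `G.induce B` to a component of `G.induce A`, provided its
support is contained in `A` and closed under adjacency within `A`. -/
lemma transfer' (c : (G.induce B).ConnectedComponent) (hsub : suppS c ⊆ A)
    (hcl : ∀ y z, y ∈ suppS c → z ∈ A → G.Adj y z → z ∈ suppS c) :
    ∃ c' : (G.induce A).ConnectedComponent, suppS c' = suppS c := by
  obtain ⟨x, hx⟩ := suppS_nonempty c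
  have hxA : x ∈ A := hsub hx
  obtain ⟨hxB, hmkx⟩ := mem_suppS.1 hx
  refine ⟨(G.induce A).connectedComponentMk ⟨x, hxA⟩, Set.Subset.antisymm ?_ ?_⟩
  · rintro y hy
    obtain ⟨hyA, hmk⟩ := mem_suppS.1 hy
    obtain ⟨p, hp⟩ := walk_in_A ((ConnectedComponent.eq.1 hmk).symm :
      (G.induce A).Reachable ⟨x, hxA⟩ ⟨y, hyA⟩)
    exact walk_closed hcl p hp hx
  · rintro y hy
    obtain ⟨hyB, hmk⟩ := mem_suppS.1 hy
    have hreach : (G.induce B).Reachable ⟨x, hxB⟩ ⟨y, hyB⟩ :=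
      ConnectedComponent.eq.1 (hmkx.trans hmk.symm)
    obtain ⟨p, hp⟩ := walk_in_suppS hreach
    have hp' : ∀ z ∈ p.support, z ∈ A := by
      intro z hz
      have := hp z hz
      rw [hmkx] at this
      exact hsub this
    exact mem_suppS.2 ⟨hsub hy,
      (ConnectedComponent.eq.2 (reachable_of_walk p hp' hxA (hsub hy)).symm)⟩

lemma odd_oddA_iff (G : SimpleGraph V) (A : Set V) : Odd (oddA G A) ↔ Odd A.ncard := by
  rw [← Nat.card_coe_set_eq]
  have e : oddA G A = (G.induce A).oddComponents.ncard := by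
    rw [oddA, ← Nat.card_coe_set_eq]
    exact Nat.card_congr (Equiv.subtypeEquivRight fun c => by rw [Nat.card_coe_set_eq]; rfl)
  rw [e]
  exact SimpleGraph.odd_ncard_oddComponents (G := G.induce A)

lemma oddA_pos_of_odd (h : Odd A.ncard) : 1 ≤ oddA G A := by
  have := (odd_oddA_iff G A).2 h
  rcases Nat.eq_zero_or_pos (oddA G A) with h0 | h1
  · simp [h0] at this
  · exact h1

instance : Finite (G.induce A).ConnectedComponent :=
  Finite.of_surjective (G.induce A).connectedComponentMk
    (fun c => c.exists_rep.imp fun _ h => h)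

/-- The key counting lemma: deleting a set `R` inside the support of a component `c`
of `G.induce A` leaves all other odd components intact, plus the odd components of
what remains of `c`. -/
lemma count {R : Set V} (c : (G.induce A).ConnectedComponent) (hR : R ⊆ suppS c) :
    Nat.card {d : (G.induce A).ConnectedComponent // Odd (Nat.card d.supp) ∧ d ≠ c}
      + oddA G (suppS c \ R) ≤ oddA G (A \ R) := by
  classical
  have hdisj : ∀ d : (G.induce A).ConnectedComponent, d ≠ c → Disjoint (suppS d) (suppS c) := by
    intro d hd
    rw [Set.disjoint_left]
    intro x hxd hxc
    exact hd (eq_of_mem_suppS hxd hxc)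
  -- left transfer: other odd components
  have hleft : ∀ d : (G.induce A).ConnectedComponent, d ≠ c →
      ∃ d' : (G.induce (A \ R)).ConnectedComponent, suppS d' = suppS d := by
    intro d hd
    refine transfer' d (fun x hx => ⟨suppS_subset d hx, fun hxR => ?_⟩) ?_
    · exact (Set.disjoint_left.1 (hdisj d hd)) hx (hR hxR)
    · intro y z hy hz hadj
      exact adj_mem_suppS hy hz.1 hadj
  -- right transfer: odd components of the remainder of c
  have hright : ∀ e : (G.induce (suppS c \ R)).ConnectedComponent,
      ∃ e' : (G.induce (A \ R)).ConnectedComponent, suppS e' = suppS e := by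
    intro e
    have hsub : suppS e ⊆ suppS c \ R := suppS_subset e
    refine transfer' e (fun x hx => ⟨suppS_subset c (hsub hx).1, (hsub hx).2⟩) ?_
    intro y z hy hz hadj
    have hzc : z ∈ suppS c := adj_mem_suppS (hsub hy).1 hz.1 hadj
    have hzB : z ∈ suppS c \ R := ⟨hzc, hz.2⟩
    exact adj_mem_suppS (c := e) hy hzB hadj
  -- build the injection
  set T := {c' : (G.induce (A \ R)).ConnectedComponent // Odd (Nat.card c'.supp)}
  have hodd' : ∀ {B' : Set V} (u : (G.induce B').ConnectedComponent)
      (u' : (G.induce (A \ R)).ConnectedComponent), suppS u' = suppS u →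
      Odd (Nat.card u.supp) → Odd (Nat.card u'.supp) := by
    intro B' u u' hsupp hodd
    rwa [← ncard_suppS, hsupp, ncard_suppS]
  let Φ : {d : (G.induce A).ConnectedComponent // Odd (Nat.card d.supp) ∧ d ≠ c} ⊕
      {e : (G.induce (suppS c \ R)).ConnectedComponent // Odd (Nat.card e.supp)} → T :=
    fun x => match x with
    | .inl d => ⟨(hleft d.1 d.2.2).choose,
        hodd' d.1 _ (hleft d.1 d.2.2).choose_spec d.2.1⟩
    | .inr e => ⟨(hright e.1).choose, hodd' e.1 _ (hright e.1).choose_spec e.2⟩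
  have hinj : Function.Injective Φ := by
    rintro (d | e) (d' | e') heq
    · have h1 := (hleft d.1 d.2.2).choose_spec
      have h2 := (hleft d'.1 d'.2.2).choose_spec
      have : suppS d.1 = suppS d'.1 := by
        rw [← h1, ← h2]
        simp only [Φ] at heq
        rw [Subtype.mk.injEq] at heq
        rw [heq]
      exact congrArg Sum.inl (Subtype.ext (suppS_inj this))
    · exfalso
      have h1 := (hleft d.1 d.2.2).choose_spec
      have h2 := (hright e'.1).choose_spec
      simp only [Φ] at heq
      rw [Subtype.mk.injEq] at heq
      rw [heq, h2] at h1
      obtain ⟨x, hx⟩ := suppS_nonempty e'.1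
      have hxc : x ∈ suppS c := (suppS_subset e'.1 hx).1
      have hxd : x ∈ suppS d.1 := h1 ▸ hx
      exact (Set.disjoint_left.1 (hdisj d.1 d.2.2)) hxd hxc
    · exfalso
      have h1 := (hleft d'.1 d'.2.2).choose_spec
      have h2 := (hright e.1).choose_spec
      simp only [Φ] at heq
      rw [Subtype.mk.injEq] at heq
      rw [← heq, h2] at h1
      obtain ⟨x, hx⟩ := suppS_nonempty e.1
      have hxc : x ∈ suppS c := (suppS_subset e.1 hx).1
      have hxd : x ∈ suppS d'.1 := h1 ▸ hx
      exact (Set.disjoint_left.1 (hdisj d'.1 d'.2.2)) hxd hxc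
    · have h1 := (hright e.1).choose_spec
      have h2 := (hright e'.1).choose_spec
      simp only [Φ] at heq
      rw [Subtype.mk.injEq] at heq
      have : suppS e.1 = suppS e'.1 := by rw [← h1, ← h2, heq]
      exact congrArg Sum.inr (Subtype.ext (suppS_inj this))
  calc Nat.card {d : (G.induce A).ConnectedComponent // Odd (Nat.card d.supp) ∧ d ≠ c}
      + oddA G (suppS c \ R)
      = Nat.card ({d : (G.induce A).ConnectedComponent // Odd (Nat.card d.supp) ∧ d ≠ c} ⊕
        {e : (G.induce (suppS c \ R)).ConnectedComponent // Odd (Nat.card e.supp)}) := by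
        rw [Nat.card_sum]; rfl
    _ ≤ Nat.card T := Nat.card_le_card_of_injective Φ hinj
    _ = oddA G (A \ R) := rfl


lemma card_le_card_ne_add_one {α : Type*} [Finite α] {p : α → Prop} {c : α} :
    Nat.card {x // p x} ≤ Nat.card {x // p x ∧ x ≠ c} + 1 := by
  classical
  haveI : Finite (Option {x // p x ∧ x ≠ c}) :=
    Finite.of_equiv _ (Equiv.optionEquivSumPUnit.{0} _).symm
  have : Nat.card (Option {x // p x ∧ x ≠ c}) = Nat.card {x // p x ∧ x ≠ c} + 1 :=
    Finite.card_option
  rw [← this]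
  refine Nat.card_le_card_of_injective
    (fun x => if h : x.1 = c then none else some ⟨x.1, x.2, h⟩) ?_
  rintro ⟨x, hx⟩ ⟨y, hy⟩ heq
  by_cases h1 : x = c
  · by_cases h2 : y = c
    · exact Subtype.ext (h1.trans h2.symm)
    · simp [h1, h2] at heq
  · by_cases h2 : y = c
    · simp [h1, h2] at heq
    · simp only [h1, h2, dif_neg, not_false_iff, Option.some.injEq, Subtype.mk.injEq] at heq
      exact Subtype.ext heq

lemma tutteSet (G : SimpleGraph V) : ∀ (n : ℕ) (B : Set V), B.ncard = n →
    (∀ R : Set V, R ⊆ B → oddA G (B \ R) ≤ R.ncard) →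
    ∃ M : G.Subgraph, M.IsMatching ∧ M.verts = B := by
  intro n
  induction n using Nat.strong_induction_on with
  | _ n ih =>
  intro B hBn hT
  classical
  rcases Set.eq_empty_or_nonempty B with rfl | ⟨v₀, hv₀⟩
  · exact ⟨⊥, fun v hv => absurd hv (by simp), by simp⟩
  have hBfin : B.Finite := B.toFinite
  -- B has even cardinality
  have hB0 : oddA G B = 0 := by
    have := hT ∅ (Set.empty_subset B)
    simpa using this
  have hBeven : Even B.ncard := by
    rw [← Nat.not_odd_iff_even]
    intro hodd
    have := oddA_pos_of_odd (G := G) hodd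
    omega
  -- tight sets
  set tight : Set V → Prop := fun S => S ⊆ B ∧ oddA G (B \ S) = S.ncard with htight_def
  have htight_v₀ : tight {v₀} := by
    constructor
    · simpa using hv₀
    · have h1 := hT {v₀} (by simpa using hv₀)
      have h2 : Odd (B \ {v₀}).ncard := by
        rw [Set.ncard_diff_singleton_of_mem hv₀]
        have hpos : 1 ≤ B.ncard := (Set.ncard_pos hBfin).2 ⟨v₀, hv₀⟩
        rw [Nat.odd_iff] at *
        rw [Nat.even_iff] at hBeven
        omega
      have h3 := oddA_pos_of_odd (G := G) h2
      rw [Set.ncard_singleton] at *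
      omega
  -- a maximal tight set
  obtain ⟨S, hStight, hSmax'⟩ := Set.Finite.exists_maximalFor id {S | tight S}
    (Set.toFinite _) ⟨{v₀}, htight_v₀⟩
  have hSmax : ∀ S' ∈ {S | tight S}, id S ≤ id S' → id S = id S' :=
    fun S' h1 h2 => le_antisymm h2 (hSmax' h1 h2)
  simp only [id] at hSmax
  obtain ⟨hSB, hSeq⟩ := hStight
  -- all components of `G.induce (B \ S)` are odd
  have hallodd : ∀ c : (G.induce (B \ S)).ConnectedComponent, Odd (Nat.card c.supp) := by
    intro c
    by_contra hceven
    obtain ⟨v, hv⟩ := suppS_nonempty c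
    have hvBS : v ∈ B \ S := suppS_subset c hv
    have hsub : ({v} : Set V) ⊆ suppS c := by simpa using hv
    have hcount := count c hsub
    have hrem : 1 ≤ oddA G (suppS c \ {v}) := by
      apply oddA_pos_of_odd
      rw [Set.ncard_diff_singleton_of_mem hv]
      have heq : (suppS c).ncard = Nat.card c.supp := by
        rw [← Nat.card_coe_set_eq, ncard_suppS]
      have heven : Even (suppS c).ncard := by
        rw [heq, ← Nat.not_odd_iff_even]; exact hceven
      have hpos : 1 ≤ (suppS c).ncard := (Set.ncard_pos (Set.toFinite _)).2 ⟨v, hv⟩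
      rw [Nat.odd_iff]
      rw [Nat.even_iff] at heven
      omega
    have hne : oddA G (B \ S) ≤
        Nat.card {d : (G.induce (B \ S)).ConnectedComponent // Odd (Nat.card d.supp) ∧ d ≠ c} := by
      refine Nat.card_le_card_of_injective
        (fun d => ⟨d.1, d.2, fun h => hceven (h ▸ d.2)⟩) ?_
      rintro ⟨d, hd⟩ ⟨d', hd'⟩ h
      exact Subtype.ext (by simpa using congrArg Subtype.val h)
    have hbig : S.ncard + 1 ≤ oddA G ((B \ S) \ {v}) := by
      calc S.ncard + 1 = oddA G (B \ S) + 1 := by rw [hSeq]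
        _ ≤ Nat.card {d : (G.induce (B \ S)).ConnectedComponent // Odd (Nat.card d.supp) ∧ d ≠ c}
            + oddA G (suppS c \ {v}) := add_le_add hne hrem
        _ ≤ oddA G ((B \ S) \ {v}) := hcount
    have hdd : (B \ S) \ {v} = B \ (S ∪ {v}) := by rw [Set.diff_diff]
    have hS'B : S ∪ {v} ⊆ B := Set.union_subset hSB (by simpa using hvBS.1)
    have hncard : (S ∪ {v}).ncard = S.ncard + 1 := by
      rw [Set.union_singleton, Set.ncard_insert_of_notMem hvBS.2 (Set.toFinite _)]
    have htle := hT (S ∪ {v}) hS'B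
    rw [hdd] at hbig
    have htight' : tight (S ∪ {v}) := ⟨hS'B, by omega⟩
    have := hSmax _ htight' (Set.subset_union_left)
    exact hvBS.2 (this ▸ (Set.mem_union_right S rfl : v ∈ S ∪ {v}))
  -- factor-criticality condition for components
  have hFC : ∀ c : (G.induce (B \ S)).ConnectedComponent, ∀ a ∈ suppS c,
      ∀ R' ⊆ suppS c \ {a}, oddA G ((suppS c \ {a}) \ R') ≤ R'.ncard := by
    intro c a ha R' hR'
    by_contra hlt
    push_neg at hlt
    set k := R'.ncard with hk
    set x := oddA G ((suppS c \ {a}) \ R') with hx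
    have haBS : a ∈ B \ S := suppS_subset c ha
    -- parity boost: x ≥ k + 2
    have hodd1 : (suppS c).ncard = Nat.card c.supp := by
      rw [← Nat.card_coe_set_eq, ncard_suppS]
    have hoddc : Odd (suppS c).ncard := by rw [hodd1]; exact hallodd c
    have hm : (suppS c \ {a}).ncard = (suppS c).ncard - 1 :=
      Set.ncard_diff_singleton_of_mem ha
    have hkle : k ≤ (suppS c \ {a}).ncard := Set.ncard_le_ncard hR' (Set.toFinite _)
    have hrest : ((suppS c \ {a}) \ R').ncard = (suppS c \ {a}).ncard - k :=
      Set.ncard_diff hR'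
    have hpos : 1 ≤ (suppS c).ncard := (Set.ncard_pos (Set.toFinite _)).2 ⟨a, ha⟩
    have hparx : x % 2 = ((suppS c \ {a}).ncard - k) % 2 := by
      have h1 := odd_oddA_iff G ((suppS c \ {a}) \ R')
      rw [hrest, ← hx] at h1
      rcases Nat.even_or_odd x with he | ho
      · have h2 : ¬ Odd (((suppS c \ {a}).ncard - k)) := fun hcon =>
          (Nat.not_odd_iff_even.2 he) (h1.2 hcon)
        rw [Nat.not_odd_iff_even, Nat.even_iff] at h2
        rw [Nat.even_iff] at he
        omega
      · have h2 := h1.1 ho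
        rw [Nat.odd_iff] at h2 ho
        omega
    have hx2 : k + 2 ≤ x := by
      rw [Nat.odd_iff] at hoddc
      omega
    -- apply the counting lemma with R = {a} ∪ R'
    have hsubR : {a} ∪ R' ⊆ suppS c :=
      Set.union_subset (by simpa using ha) (fun y hy => (hR' hy).1)
    have hcount := count c hsubR
    have hdd1 : suppS c \ ({a} ∪ R') = (suppS c \ {a}) \ R' := (Set.diff_diff).symm
    rw [hdd1] at hcount
    have hcardne : S.ncard - 1 ≤
        Nat.card {d : (G.induce (B \ S)).ConnectedComponent // Odd (Nat.card d.supp) ∧ d ≠ c} := by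
      have := card_le_card_ne_add_one (p := fun d : (G.induce (B \ S)).ConnectedComponent =>
        Odd (Nat.card d.supp)) (c := c)
      have h0 : oddA G (B \ S) = Nat.card
        {d : (G.induce (B \ S)).ConnectedComponent // Odd (Nat.card d.supp)} := rfl
      omega
    have hSne : S.Nonempty := by
      rcases Set.eq_empty_or_nonempty S with rfl | h
      · exact absurd (hSmax {v₀} htight_v₀ (Set.empty_subset _)).symm
          (Set.singleton_ne_empty v₀)
      · exact h
    have hSpos : 1 ≤ S.ncard := (Set.ncard_pos (Set.toFinite _)).2 hSne
    set S' := (S ∪ {a}) ∪ R' with hS'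
    have hS'B : S' ⊆ B := Set.union_subset
      (Set.union_subset hSB (by simpa using haBS.1))
      (fun y hy => (suppS_subset c (hR' hy).1).1)
    have hddB : (B \ S) \ ({a} ∪ R') = B \ S' := by
      rw [Set.diff_diff, hS', Set.union_assoc]
    rw [hddB] at hcount
    have h1 : (S ∪ {a}).ncard = S.ncard + 1 := by
      rw [Set.union_singleton, Set.ncard_insert_of_notMem haBS.2 (Set.toFinite _)]
    have hdisj : Disjoint (S ∪ {a}) R' := by
      rw [Set.disjoint_right]
      intro y hy
      have h2 := hR' hy
      have h3 := suppS_subset c h2.1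
      rintro (h4 | h4)
      · exact h3.2 h4
      · exact h2.2 h4
    have hncardS' : S'.ncard = S.ncard + 1 + k := by
      rw [hS', Set.ncard_union_eq hdisj (Set.toFinite _) (Set.toFinite _), h1]
    have htle := hT S' hS'B
    have htight' : tight S' := ⟨hS'B, by omega⟩
    have hfinal := hSmax S' htight'
      ((Set.subset_union_left).trans (Set.subset_union_left))
    have haS' : a ∈ S' := Set.mem_union_left _ (Set.mem_union_right _ rfl)
    rw [← hfinal] at haS'
    exact haBS.2 haS'
  -- number of components equals |S|
  have hcard : Nat.card (G.induce (B \ S)).ConnectedComponent = S.ncard := by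
    rw [← hSeq]
    exact (Nat.card_congr (Equiv.subtypeUnivEquiv hallodd)).symm
  -- Hall's condition and a system of distinct representatives
  obtain ⟨f, hfinj, hf⟩ : ∃ f : (G.induce (B \ S)).ConnectedComponent → V,
      Function.Injective f ∧ ∀ c, f c ∈ S ∧ ∃ a ∈ suppS c, G.Adj a (f c) := by
    set t : (G.induce (B \ S)).ConnectedComponent → Finset V :=
      fun c => (S ∩ {s | ∃ a ∈ suppS c, G.Adj a s}).toFinite.toFinset with ht
    have hmem : ∀ c y, y ∈ t c ↔ y ∈ S ∧ ∃ a ∈ suppS c, G.Adj a y := by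
      intro c y
      rw [ht, Set.Finite.mem_toFinset, Set.mem_inter_iff, Set.mem_setOf_eq]
    have hHall : ∀ F : Finset ((G.induce (B \ S)).ConnectedComponent),
        F.card ≤ (F.biUnion t).card := by
      intro F
      by_contra hcon
      push_neg at hcon
      set S₀ : Set V := ↑(F.biUnion t) with hS₀
      have hS₀S : S₀ ⊆ S := by
        intro y hy
        rw [hS₀, Finset.coe_biUnion] at hy
        simp only [Set.mem_iUnion] at hy
        obtain ⟨c, _, hc⟩ := hy
        exact ((hmem c y).1 hc).1
      have htrans : ∀ c ∈ F, ∃ d : (G.induce (B \ S₀)).ConnectedComponent,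
          suppS d = suppS c := by
        intro c hc
        refine transfer' c (fun y hy => ?_) (fun y z hy hz hadj => ?_)
        · have h1 := suppS_subset c hy
          exact ⟨h1.1, fun h2 => h1.2 (hS₀S h2)⟩
        · by_cases hzS : z ∈ S
          · exfalso
            apply hz.2
            rw [hS₀, Finset.coe_biUnion]
            simp only [Set.mem_iUnion]
            exact ⟨c, hc, (hmem c z).2 ⟨hzS, y, hy, hadj⟩⟩
          · exact adj_mem_suppS hy ⟨hz.1, hzS⟩ hadj
      have hinj2 : F.card ≤ oddA G (B \ S₀) := by
        rw [← Nat.card_eq_finsetCard]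
        refine Nat.card_le_card_of_injective
          (fun c => ⟨(htrans c.1 c.2).choose, ?_⟩) ?_
        · rw [← ncard_suppS, (htrans c.1 c.2).choose_spec, ncard_suppS]
          exact hallodd c.1
        · rintro ⟨c, hc⟩ ⟨c', hc'⟩ heq
          have h1 := (htrans c hc).choose_spec
          have h2 := (htrans c' hc').choose_spec
          rw [Subtype.mk.injEq] at heq
          rw [heq, h2] at h1
          exact Subtype.ext (suppS_inj h1).symm
      have hle := hT S₀ (hS₀S.trans hSB)
      have hncard0 : S₀.ncard = (F.biUnion t).card := by
        rw [hS₀, Set.ncard_coe_finset]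
      omega
    obtain ⟨f, hfinj, hft⟩ := (Finset.all_card_le_biUnion_card_iff_exists_injective t).1 hHall
    exact ⟨f, hfinj, fun c => (hmem c (f c)).1 (hft c)⟩
  -- f is surjective onto S
  have hfs : Set.range f = S := by
    refine Set.eq_of_subset_of_ncard_le (fun x ⟨c, hc⟩ => hc ▸ (hf c).1) ?_ (S.toFinite)
    rw [← hcard, ← Nat.card_coe_set_eq, Nat.card_range_of_injective hfinj]
  -- choose the matched vertex in each component
  have haC : ∀ c : (G.induce (B \ S)).ConnectedComponent,
      (hf c).2.choose ∈ suppS c ∧ G.Adj ((hf c).2.choose) (f c) := fun c =>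
    ⟨(hf c).2.choose_spec.1, (hf c).2.choose_spec.2⟩
  set aC : (G.induce (B \ S)).ConnectedComponent → V := fun c => (hf c).2.choose with haCdef
  -- perfect matchings on the components minus their matched vertex, by induction
  have hMc : ∀ c : (G.induce (B \ S)).ConnectedComponent,
      ∃ M : G.Subgraph, M.IsMatching ∧ M.verts = suppS c \ {aC c} := by
    intro c
    have hsubB : suppS c \ {aC c} ⊆ B := fun y hy => (suppS_subset c hy.1).1
    have hlt : (suppS c \ {aC c}).ncard < n := by
      rw [← hBn]
      refine Set.ncard_lt_ncard ⟨hsubB, fun hcon => ?_⟩ hBfin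
      exact (hcon (suppS_subset c (haC c).1).1).2 rfl
    exact ih _ hlt _ rfl (hFC c (aC c) (haC c).1)
  choose Mc hMc1 hMc2 using hMc
  set piece : (G.induce (B \ S)).ConnectedComponent → G.Subgraph :=
    fun c => G.subgraphOfAdj (haC c).2 ⊔ Mc c with hpiece
  have hfS : ∀ c, f c ∈ S := fun c => (hf c).1
  have hsuppBS : ∀ c : (G.induce (B \ S)).ConnectedComponent, suppS c ⊆ B \ S := suppS_subset
  have hverts : ∀ c, (piece c).verts = suppS c ∪ {f c} := by
    intro c
    rw [hpiece]
    simp only [Subgraph.verts_sup, subgraphOfAdj_verts, hMc2 c]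
    ext y
    simp only [Set.mem_union, Set.mem_insert_iff, Set.mem_singleton_iff, Set.mem_diff]
    constructor
    · rintro ((rfl | rfl) | ⟨h1, _⟩)
      · exact Or.inl (haC c).1
      · exact Or.inr rfl
      · exact Or.inl h1
    · rintro (h1 | rfl)
      · by_cases h2 : y = aC c
        · exact Or.inl (Or.inl h2)
        · exact Or.inr ⟨h1, h2⟩
      · exact Or.inl (Or.inr rfl)
  have hpm : ∀ c, (piece c).IsMatching := by
    intro c
    rw [hpiece]
    refine (Subgraph.IsMatching.subgraphOfAdj (haC c).2).sup (hMc1 c) ?_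
    rw [(Subgraph.IsMatching.subgraphOfAdj (haC c).2).support_eq_verts,
      (hMc1 c).support_eq_verts, subgraphOfAdj_verts, hMc2 c]
    rw [Set.disjoint_left]
    rintro y (rfl | rfl)
    · rintro ⟨_, h2⟩; exact h2 rfl
    · rintro ⟨h1, _⟩; exact (hsuppBS c h1).2 (hfS c)
  refine ⟨⨆ c, piece c, ?_, ?_⟩
  · refine Subgraph.IsMatching.iSup hpm ?_
    intro c d hcd
    rw [(hpm c).support_eq_verts, (hpm d).support_eq_verts, hverts c, hverts d]
    rw [Set.disjoint_left]
    rintro y (h1 | rfl) (h2 | h3)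
    · exact hcd (eq_of_mem_suppS h1 h2)
    · rw [Set.mem_singleton_iff] at h3
      exact (hsuppBS c h1).2 (h3 ▸ hfS d)
    · exact (hsuppBS d h2).2 (hfS c)
    · rw [Set.mem_singleton_iff] at h3
      exact hcd (hfinj h3)
  · rw [Subgraph.verts_iSup]
    ext y
    simp only [Set.mem_iUnion]
    constructor
    · rintro ⟨c, hc⟩
      rw [hverts c] at hc
      rcases hc with h1 | rfl
      · exact (hsuppBS c h1).1
      · exact hSB (hfS c)
    · intro hy
      by_cases hyS : y ∈ S
      · have : y ∈ Set.range f := by rw [hfs]; exact hyS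
        obtain ⟨c, rfl⟩ := this
        exact ⟨c, (hverts c) ▸ Set.mem_union_right _ rfl⟩
      · refine ⟨(G.induce (B \ S)).connectedComponentMk ⟨y, ⟨hy, hyS⟩⟩,
          (hverts _) ▸ Set.mem_union_left _ (mem_suppS.2 ⟨⟨hy, hyS⟩, rfl⟩)⟩

end TutteAux

theorem stmt_1 {V : Type*} [Fintype V] (G : SimpleGraph V)
    (hconn : G.Connected) (hodd : Odd (Fintype.card V))
    (h : ∀ S : Set V, S.Nonempty → oddComp G S ≤ S.ncard) :
    ∀ x : V, ∃ M : G.Subgraph, M.IsMatching ∧ M.verts = {x}ᶜ := by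
  classical
  intro x
  apply TutteAux.tutteSet G (({x}ᶜ : Set V).ncard) {x}ᶜ rfl
  intro R hR
  have hxR : x ∉ R := fun hx => (hR hx) rfl
  have hset : ({x}ᶜ : Set V) \ R = (insert x R)ᶜ := by
    ext y
    simp only [Set.mem_diff, Set.mem_compl_iff, Set.mem_singleton_iff, Set.mem_insert_iff,
      not_or]
  rw [hset]
  have h2 := h (insert x R) ⟨x, Set.mem_insert x R⟩
  rw [TutteAux.oddComp_eq_oddA] at h2
  have h3 : (insert x R).ncard = R.ncard + 1 := Set.ncard_insert_of_notMem hxR (Set.toFinite _)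
  have hpar := TutteAux.odd_oddA_iff G ((insert x R)ᶜ)
  have hcompl : (insert x R).ncard + ((insert x R)ᶜ).ncard = Fintype.card V := by
    rw [← Nat.card_eq_fintype_card]
    exact Set.ncard_add_ncard_compl _
  rw [Nat.odd_iff] at hodd
  set q := TutteAux.oddA G ((insert x R)ᶜ) with hq
  rcases Nat.even_or_odd q with he | ho
  · rw [Nat.even_iff] at he
    have h5 : ((insert x R)ᶜ).ncard % 2 = 0 := by
      rcases Nat.even_or_odd (((insert x R)ᶜ).ncard) with he2 | ho2
      · rw [Nat.even_iff] at he2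
        exact he2
      · exfalso
        have h6 := hpar.2 ho2
        rw [Nat.odd_iff] at h6
        omega
    omega
  · have h4 := hpar.1 ho
    rw [Nat.odd_iff] at ho h4
    omega
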